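/- Let γ : [0, ℓ] → ℝ⁴ be a C² curve parameterized by arc length (so |γ'(t)| = 1 for all t) with γ(0) = γ(ℓ) = 0. Then ∫₀^ℓ |γ''(t)| dt ≥ 1. -/

import Mathlib

open intervalIntegral RealInnerProductSpace

/-- A closed C² unit-speed curve of length ℓ in ℝ⁴ with both endpoints at the
origin satisfies ∫₀^ℓ |γ''| ≥ 1. -/
theorem arc_length_curve_total_curvature_ge_one
    (γ : ℝ → EuclideanSpace ℝ (Fin 4)) (ℓ : ℝ)
    (hℓ : 0 < ℓ)
    (hγ : ContDiff ℝ 2 γ)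
    (hunit : ∀ t ∈ Set.Icc (0 : ℝ) ℓ, ‖deriv γ t‖ = 1)
    (h0 : γ 0 = 0) (h1 : γ ℓ = 0) :
    1 ≤ ∫ t in (0:ℝ)..ℓ, ‖deriv (deriv γ) t‖ := by
  set K := ∫ t in (0:ℝ)..ℓ, ‖deriv (deriv γ) t‖ with hK
  have hγ2 : ContDiff ℝ ((1:ℕ)+1) γ := by exact_mod_cast hγ
  have hγ' : ContDiff ℝ 1 (deriv γ) := by
    exact_mod_cast (contDiff_succ_iff_deriv.mp hγ2).2.2
  have hd1 : Differentiable ℝ γ := hγ.differentiable two_ne_zero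
  have hd2 : Differentiable ℝ (deriv γ) := hγ'.differentiable one_ne_zero
  have hcont1 : Continuous (deriv γ) := hγ'.continuous
  have hcont2 : Continuous (deriv (deriv γ)) := hγ'.continuous_deriv le_rfl
  set v := deriv γ 0 with hv
  have hvnorm : ‖v‖ = 1 := hunit 0 ⟨le_rfl, hℓ.le⟩
  -- FTC: ∫ γ' = 0
  have hFTC : ∫ t in (0:ℝ)..ℓ, deriv γ t = 0 := by
    rw [integral_deriv_eq_sub (fun x _ => hd1 x) (hcont1.intervalIntegrable 0 ℓ),
      h0, h1, sub_zero]
  -- bound on deviation of tangent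
  have hdev : ∀ t ∈ Set.Icc (0:ℝ) ℓ, ‖deriv γ t - v‖ ≤ K := by
    intro t ht
    have hFTC2 : ∫ s in (0:ℝ)..t, deriv (deriv γ) s = deriv γ t - v := by
      rw [integral_deriv_eq_sub (fun x _ => hd2 x) (hcont2.intervalIntegrable 0 t)]
    rw [← hFTC2]
    calc ‖∫ s in (0:ℝ)..t, deriv (deriv γ) s‖
        ≤ ∫ s in (0:ℝ)..t, ‖deriv (deriv γ) s‖ :=
          norm_integral_le_integral_norm ht.1
      _ ≤ K := by
          rw [hK, ← integral_add_adjacent_intervals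
            ((hcont2.norm.intervalIntegrable 0 t))
            ((hcont2.norm.intervalIntegrable t ℓ))]
          have : 0 ≤ ∫ s in t..ℓ, ‖deriv (deriv γ) s‖ :=
            integral_nonneg ht.2 (fun s _ => norm_nonneg _)
          linarith
  -- pointwise lower bound on inner product
  have hpt : ∀ t ∈ Set.Icc (0:ℝ) ℓ, 1 - K ≤ ⟪v, deriv γ t⟫ := by
    intro t ht
    have h1' : ⟪v, deriv γ t⟫ = ‖v‖^2 + ⟪v, deriv γ t - v⟫ := by
      rw [inner_sub_right, real_inner_self_eq_norm_sq]; ring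
    have h2' : |⟪v, deriv γ t - v⟫| ≤ ‖deriv γ t - v‖ := by
      calc |⟪v, deriv γ t - v⟫| ≤ ‖v‖ * ‖deriv γ t - v‖ := abs_real_inner_le_norm _ _
        _ = ‖deriv γ t - v‖ := by rw [hvnorm, one_mul]
    have := hdev t ht
    have := abs_le.mp h2'
    rw [h1', hvnorm]
    nlinarith
  -- integrability of inner product
  have hIvInt : IntervalIntegrable (fun t => ⟪v, deriv γ t⟫) MeasureTheory.volume 0 ℓ :=
    (continuous_const.inner hcont1).intervalIntegrable 0 ℓ
  -- integral of inner product is zero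
  have hz : ∫ t in (0:ℝ)..ℓ, ⟪v, deriv γ t⟫ = 0 := by
    have := (innerSL ℝ v).intervalIntegral_comp_comm (hcont1.intervalIntegrable 0 ℓ)
      (a := 0) (b := ℓ) (μ := MeasureTheory.volume)
    simp only [innerSL_apply_apply] at this
    rw [this, hFTC]
    simp
  -- compare with constant
  have hcmp : (1 - K) * ℓ ≤ ∫ t in (0:ℝ)..ℓ, ⟪v, deriv γ t⟫ := by
    have := integral_mono_on hℓ.le (_root_.intervalIntegrable_const (c := 1 - K)) hIvInt hpt
    simpa [intervalIntegral.integral_const, smul_eq_mul, mul_comm, mul_sub, sub_mul] using this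
  rw [hz] at hcmp
  nlinarith
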